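/- Let E be a nonempty finite set of routing entries each in conflict with a fixed entry r and all having the same conflict zone with r. Then any two entries of E are comparable under the specificity (inclusion) ordering; in particular E has a minimum. -/
import Mathlib


/-- Addresses are bitvectors of fixed length `n`. -/
abbrev Addr (n : ℕ) := Fin n → Bool

/-- The set of addresses denoted by the prefix `p/plen`. -/
def pset (n : ℕ) (P : Addr n × ℕ) : Set (Addr n) :=
  {a | ∀ i : Fin n, (i : ℕ) < P.2 → a i = P.1 i}

/-- The set of address pairs matched by a destination–source entry. -/
def eset (n : ℕ) (e : (Addr n × ℕ) × (Addr n × ℕ)) : Set (Addr n × Addr n) :=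
  pset n e.1 ×ˢ pset n e.2

/-- Conflict: the matched sets intersect and neither contains the other. -/
def Conflict (n : ℕ) (e e' : (Addr n × ℕ) × (Addr n × ℕ)) : Prop :=
  (eset n e ∩ eset n e').Nonempty ∧ ¬ eset n e ⊆ eset n e' ∧ ¬ eset n e' ⊆ eset n e

lemma pset_nonempty (n : ℕ) (P : Addr n × ℕ) : (pset n P).Nonempty :=
  ⟨P.1, fun _ _ => rfl⟩

lemma pset_comparable (n : ℕ) (P Q : Addr n × ℕ)
    (h : (pset n P ∩ pset n Q).Nonempty) :
    pset n P ⊆ pset n Q ∨ pset n Q ⊆ pset n P := by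
  obtain ⟨w, hwP, hwQ⟩ := h
  rcases le_total P.2 Q.2 with hle | hle
  · right
    intro a ha i hi
    calc a i = Q.1 i := ha i (lt_of_lt_of_le hi hle)
    _ = w i := (hwQ i (lt_of_lt_of_le hi hle)).symm
    _ = P.1 i := hwP i hi
  · left
    intro a ha i hi
    calc a i = P.1 i := ha i (lt_of_lt_of_le hi hle)
    _ = w i := (hwP i (lt_of_lt_of_le hi hle)).symm
    _ = Q.1 i := hwQ i hi

lemma eset_subset_iff (n : ℕ) (e e' : (Addr n × ℕ) × (Addr n × ℕ)) :
    eset n e ⊆ eset n e' ↔ pset n e.1 ⊆ pset n e'.1 ∧ pset n e.2 ⊆ pset n e'.2 := by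
  unfold eset
  rw [Set.prod_subset_prod_iff]
  have h1 := pset_nonempty n e.1
  have h2 := pset_nonempty n e.2
  constructor
  · rintro (h | h | h)
    · exact h
    · exact absurd h h1.ne_empty
    · exact absurd h h2.ne_empty
  · exact Or.inl

/-- Orientation of a conflict. -/
lemma conflict_orient (n : ℕ) (e r : (Addr n × ℕ) × (Addr n × ℕ))
    (h : Conflict n e r) :
    (pset n e.1 ⊆ pset n r.1 ∧ pset n r.2 ⊆ pset n e.2 ∧ pset n e.1 ≠ pset n r.1 ∧
      eset n e ∩ eset n r = pset n e.1 ×ˢ pset n r.2) ∨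
    (pset n r.1 ⊆ pset n e.1 ∧ pset n e.2 ⊆ pset n r.2 ∧ pset n e.2 ≠ pset n r.2 ∧
      eset n e ∩ eset n r = pset n r.1 ×ˢ pset n e.2) := by
  obtain ⟨hint, hns1, hns2⟩ := h
  have hprod : eset n e ∩ eset n r
      = (pset n e.1 ∩ pset n r.1) ×ˢ (pset n e.2 ∩ pset n r.2) := by
    unfold eset; rw [Set.prod_inter_prod]
  rw [hprod] at hint
  obtain ⟨⟨x, y⟩, hx, hy⟩ := hint
  have hd := pset_comparable n e.1 r.1 ⟨x, hx⟩
  have hs := pset_comparable n e.2 r.2 ⟨y, hy⟩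
  rw [eset_subset_iff] at hns1 hns2
  rcases hd with hd | hd <;> rcases hs with hs | hs
  · exact absurd ⟨hd, hs⟩ hns1
  · left
    refine ⟨hd, hs, ?_, ?_⟩
    · intro heq
      exact hns2 ⟨heq.symm.le, hs⟩
    · rw [hprod, Set.inter_eq_left.mpr hd, Set.inter_eq_right.mpr hs]
  · right
    refine ⟨hd, hs, ?_, ?_⟩
    · intro heq
      exact hns2 ⟨hd, heq.symm.le⟩
    · rw [hprod, Set.inter_eq_right.mpr hd, Set.inter_eq_left.mpr hs]
  · exact absurd ⟨hd, hs⟩ hns2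

lemma exists_min_of_total {α : Type*} {R : α → α → Prop}
    (hT : ∀ a b c, R a b → R b c → R a c) (S : Finset α) :
    (∀ a ∈ S, ∀ b ∈ S, R a b ∨ R b a) → S.Nonempty → ∃ m ∈ S, ∀ a ∈ S, R m a := by
  classical
  induction S using Finset.induction_on with
  | empty => intro _ h; simp at h
  | @insert a S ha ih =>
    intro htot _
    have hrefl : ∀ x ∈ insert a S, R x x := fun x hx => (htot x hx x hx).elim id id
    by_cases hS : S.Nonempty
    · obtain ⟨m, hm, hmin⟩ := ih
        (fun x hx y hy => htot x (by simp [hx]) y (by simp [hy])) hS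
      rcases htot a (by simp) m (by simp [hm]) with h | h
      · refine ⟨a, by simp, ?_⟩
        intro x hx
        rcases Finset.mem_insert.mp hx with heq | hx'
        · exact heq ▸ hrefl x hx
        · exact hT _ _ _ h (hmin x hx')
      · refine ⟨m, by simp [hm], ?_⟩
        intro x hx
        rcases Finset.mem_insert.mp hx with heq | hx'
        · exact heq ▸ h
        · exact hmin x hx'
    · refine ⟨a, by simp, ?_⟩
      intro x hx
      rcases Finset.mem_insert.mp hx with heq | hx'
      · exact heq ▸ hrefl x hx
      · exact absurd ⟨x, hx'⟩ hS

/-- If `E` is a nonempty finite set of entries, each in conflict with a fixed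
    entry `r` and all sharing the same conflict zone with `r`, then any two
    entries of `E` are comparable by specificity; in particular `E` has a
    minimum. -/
theorem stmt15 (n : ℕ) (r : (Addr n × ℕ) × (Addr n × ℕ))
    (E : Finset ((Addr n × ℕ) × (Addr n × ℕ))) (hne : E.Nonempty)
    (hconf : ∀ e ∈ E, Conflict n e r)
    (hzone : ∀ e₁ ∈ E, ∀ e₂ ∈ E, eset n e₁ ∩ eset n r = eset n e₂ ∩ eset n r) :
    (∀ e₁ ∈ E, ∀ e₂ ∈ E, eset n e₁ ⊆ eset n e₂ ∨ eset n e₂ ⊆ eset n e₁) ∧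
    ∃ m ∈ E, ∀ e ∈ E, eset n m ⊆ eset n e := by
  have key : ∀ e₁ ∈ E, ∀ e₂ ∈ E, eset n e₁ ⊆ eset n e₂ ∨ eset n e₂ ⊆ eset n e₁ := by
    intro e₁ h₁ e₂ h₂
    have hz := hzone e₁ h₁ e₂ h₂
    rcases conflict_orient n e₁ r (hconf e₁ h₁) with ⟨hd1, hs1, hne1, hZ1⟩ | ⟨hd1, hs1, hne1, hZ1⟩ <;>
      rcases conflict_orient n e₂ r (hconf e₂ h₂) with ⟨hd2, hs2, hne2, hZ2⟩ | ⟨hd2, hs2, hne2, hZ2⟩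
    · rw [hZ1, hZ2] at hz
      rw [Set.prod_eq_prod_iff_of_nonempty ((pset_nonempty n e₁.1).prod (pset_nonempty n r.2))] at hz
      obtain ⟨hdd, -⟩ := hz
      have : (pset n e₁.2 ∩ pset n e₂.2).Nonempty := by
        obtain ⟨w, hw⟩ := pset_nonempty n r.2
        exact ⟨w, hs1 hw, hs2 hw⟩
      rcases pset_comparable n e₁.2 e₂.2 this with h | h
      · exact Or.inl ((eset_subset_iff n e₁ e₂).mpr ⟨hdd.le, h⟩)
      · exact Or.inr ((eset_subset_iff n e₂ e₁).mpr ⟨hdd.symm.le, h⟩)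
    · rw [hZ1, hZ2] at hz
      rw [Set.prod_eq_prod_iff_of_nonempty ((pset_nonempty n e₁.1).prod (pset_nonempty n r.2))] at hz
      exact absurd hz.1 hne1
    · rw [hZ1, hZ2] at hz
      rw [Set.prod_eq_prod_iff_of_nonempty ((pset_nonempty n r.1).prod (pset_nonempty n e₁.2))] at hz
      exact absurd hz.1.symm hne2
    · rw [hZ1, hZ2] at hz
      rw [Set.prod_eq_prod_iff_of_nonempty ((pset_nonempty n r.1).prod (pset_nonempty n e₁.2))] at hz
      obtain ⟨-, hss⟩ := hz
      have : (pset n e₁.1 ∩ pset n e₂.1).Nonempty := by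
        obtain ⟨w, hw⟩ := pset_nonempty n r.1
        exact ⟨w, hd1 hw, hd2 hw⟩
      rcases pset_comparable n e₁.1 e₂.1 this with h | h
      · exact Or.inl ((eset_subset_iff n e₁ e₂).mpr ⟨h, hss.le⟩)
      · exact Or.inr ((eset_subset_iff n e₂ e₁).mpr ⟨h, hss.symm.le⟩)
  refine ⟨key, ?_⟩
  exact exists_min_of_total (fun a b c hab hbc => hab.trans hbc) E key hne
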